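/- Let x be a real number with x > 1 and t a natural number with t ≥ 2. Then (1 - x^(2/t - 1)) / (x^(1/t) - 1) ≤ t - 1. -/

import Mathlib

lemma aux_geom (y : ℝ) (hy : 1 < y) (n : ℕ) :
    1 - (y ^ n)⁻¹ ≤ ((n : ℝ) + 1) * (y - 1) := by
  have hy0 : (0:ℝ) < y := lt_trans one_pos hy
  have hyn : (0:ℝ) < y ^ n := pow_pos hy0 n
  have hsum : (∑ i ∈ Finset.range n, y ^ i) ≤ (n : ℝ) * y ^ n := by
    calc (∑ i ∈ Finset.range n, y ^ i) ≤ ∑ i ∈ Finset.range n, y ^ n := by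
          apply Finset.sum_le_sum
          intro i hi
          exact pow_le_pow_right₀ hy.le (Finset.mem_range.mp hi).le
      _ = (n : ℝ) * y ^ n := by simp [Finset.sum_const, nsmul_eq_mul]
  have key : y ^ n - 1 ≤ ((n : ℝ) + 1) * (y - 1) * y ^ n := by
    have := geom_sum_mul y n
    calc y ^ n - 1 = (∑ i ∈ Finset.range n, y ^ i) * (y - 1) := this.symm
      _ ≤ ((n : ℝ) * y ^ n) * (y - 1) := by
          exact mul_le_mul_of_nonneg_right hsum (by linarith)
      _ ≤ (((n : ℝ) + 1) * y ^ n) * (y - 1) := by nlinarith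
      _ = ((n : ℝ) + 1) * (y - 1) * y ^ n := by ring
  have h1 : 1 - (y ^ n)⁻¹ = (y ^ n - 1) / y ^ n := by field_simp
  rw [h1, div_le_iff₀ hyn]
  exact key

theorem stmt_0 (x : ℝ) (t : ℕ) (hx : 1 < x) (ht : 2 ≤ t) :
    (1 - x ^ (2 / (t : ℝ) - 1)) / (x ^ (1 / (t : ℝ)) - 1) ≤ (t : ℝ) - 1 := by
  have hx0 : (0:ℝ) < x := lt_trans one_pos hx
  have ht0 : (0:ℝ) < (t : ℝ) := by positivity
  set y : ℝ := x ^ (1 / (t : ℝ)) with hy_def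
  have hy : 1 < y := Real.one_lt_rpow_iff_of_pos hx0 |>.mpr (Or.inl ⟨hx, by positivity⟩)
  obtain ⟨n, rfl⟩ : ∃ n, t = n + 2 := ⟨t - 2, by omega⟩
  have hexp : x ^ (2 / ((n + 2 : ℕ) : ℝ) - 1) = (y ^ n)⁻¹ := by
    have h1 : (2 / ((n + 2 : ℕ) : ℝ) - 1) = (1 / ((n + 2 : ℕ) : ℝ)) * (-(n : ℝ)) := by
      field_simp
      push_cast
      ring
    rw [h1, Real.rpow_mul hx0.le, hy_def]
    rw [Real.rpow_neg (Real.rpow_nonneg hx0.le _), Real.rpow_natCast]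
  rw [hexp]
  have hkey := aux_geom y hy n
  have hden : 0 < y - 1 := by linarith
  rw [div_le_iff₀ hden]
  push_cast
  calc 1 - (y ^ n)⁻¹ ≤ ((n : ℝ) + 1) * (y - 1) := hkey
    _ = ((n : ℝ) + 2 - 1) * (y - 1) := by ring
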